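/- Let N = p·q where p, q are natural numbers with 1 ≤ p ≤ q, and let B be a real number with q − p ≤ B. Then the integer x = p + q satisfies 2√N ≤ x ≤ 2√N + B²/(4√N), and x² − 4N = (q − p)² is a perfect square. -/
import Mathlib


/-- Let `N = p·q` with `1 ≤ p ≤ q` natural numbers, and let `B` be a real number with
`q - p ≤ B`. Then `x = p + q` satisfies `2√N ≤ x ≤ 2√N + B²/(4√N)`, and `x² - 4N = (q - p)²`
is a perfect square. -/
theorem fermat_search_interval (N p q : ℕ) (hp : 1 ≤ p) (hpq : p ≤ q) (hN : N = p * q)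
    (B : ℝ) (hB : (q : ℝ) - (p : ℝ) ≤ B) :
    2 * Real.sqrt N ≤ ((p + q : ℕ) : ℝ) ∧
    ((p + q : ℕ) : ℝ) ≤ 2 * Real.sqrt N + B ^ 2 / (4 * Real.sqrt N) ∧
    (p + q) ^ 2 - 4 * N = (q - p) ^ 2 ∧
    ∃ y : ℕ, (p + q) ^ 2 - 4 * N = y ^ 2 := by
  have hN1 : 1 ≤ N := by
    have := Nat.mul_le_mul hp (le_trans hp hpq)
    omega
  set s := Real.sqrt N with hs
  have hs0 : 0 < s := Real.sqrt_pos.mpr (by positivity)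
  have hs2 : s ^ 2 = (N : ℝ) := Real.sq_sqrt (by positivity)
  have hNR : (N : ℝ) = (p : ℝ) * q := by rw [hN]; push_cast; ring
  have hd0 : (0 : ℝ) ≤ (q : ℝ) - p := by
    have : (p : ℝ) ≤ q := by exact_mod_cast hpq
    linarith
  have hdB : ((q : ℝ) - p) ^ 2 ≤ B ^ 2 := by nlinarith
  have h1 : 2 * s ≤ ((p + q : ℕ) : ℝ) := by
    push_cast
    nlinarith [sq_nonneg ((p : ℝ) - q), sq_nonneg (2 * s - ((p : ℝ) + q))]
  refine ⟨h1, ?_, ?_, ?_⟩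
  · rw [← sub_le_iff_le_add', le_div_iff₀ (by positivity : (0:ℝ) < 4 * s)]
    push_cast
    nlinarith [sq_nonneg (((p : ℝ) + q) - 2 * s)]
  · zify [hpq, show 4 * N ≤ (p + q) ^ 2 from by nlinarith]
    push_cast [hN]; ring
  · refine ⟨q - p, ?_⟩
    zify [hpq, show 4 * N ≤ (p + q) ^ 2 from by nlinarith]
    push_cast [hN]; ring
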